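/- Let e_0, …, e_{2N} be pairwise distinct points on the unit circle with e_{2j+1} = -e_{2j} and e_{2j}² = e_j for 0 ≤ j ≤ N. Then for all z ∈ ℂ, l_{2N,2N+1}(z) = l_{N,N+1}(z²), where l_{j,k}(z) = Π_{i≠j, 0≤i<k} (z - e_i)/(e_j - e_i). -/

import Mathlib

/-- The fundamental Lagrange interpolation polynomial `l_{j,k}` at nodes `e 0, …, e (k-1)`. -/
noncomputable def lagr (e : ℕ → ℂ) (j k : ℕ) (z : ℂ) : ℂ :=
  ∏ i ∈ (Finset.range k).erase j, (z - e i) / (e j - e i)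

lemma pair_prod (f : ℕ → ℂ) (n : ℕ) :
    ∏ i ∈ Finset.range (2 * n), f i = ∏ j ∈ Finset.range n, (f (2 * j) * f (2 * j + 1)) := by
  induction n with
  | zero => simp
  | succ n ih =>
    have h2 : 2 * (n + 1) = 2 * n + 1 + 1 := by ring
    rw [h2, Finset.prod_range_succ, Finset.prod_range_succ, ih, Finset.prod_range_succ, mul_assoc]

theorem stmt12 (N : ℕ) (hN : 1 ≤ N) (e : ℕ → ℂ)
    (hdist : ∀ i ≤ 2 * N, ∀ j ≤ 2 * N, i ≠ j → e i ≠ e j)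
    (hmod : ∀ i ≤ 2 * N, ‖e i‖ = 1)
    (hneg : ∀ j ≤ N, e (2 * j + 1) = -e (2 * j))
    (hsq : ∀ j ≤ N, (e (2 * j)) ^ 2 = e j) (z : ℂ) :
    lagr e (2 * N) (2 * N + 1) z = lagr e N (N + 1) (z ^ 2) := by
  unfold lagr
  rw [Finset.range_add_one, Finset.erase_insert (by simp),
      Finset.range_add_one, Finset.erase_insert (by simp),
      pair_prod]
  apply Finset.prod_congr rfl
  intro j hj
  have hjN : j ≤ N := le_of_lt (Finset.mem_range.mp hj)
  have h1 := hneg j hjN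
  have h2 := hsq j hjN
  have h3 := hsq N le_rfl
  rw [div_mul_div_comm, h1]
  have hnum : (z - e (2 * j)) * (z - -e (2 * j)) = z ^ 2 - e j := by
    rw [← h2]; ring
  have hden : (e (2 * N) - e (2 * j)) * (e (2 * N) - -e (2 * j)) = e N - e j := by
    rw [← h2, ← h3]; ring
  rw [hnum, hden]
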